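/- In the n-BTS conservative spectrum allocation problem (P1), for any optimal allocation x* and any subset M ⊆ N with |M| = m, there exists an optimal allocation x such that x_B = x*_B for every B ⊆ N not contained in M, and the spectrum exclusively used by the base stations in M is divided into at most m segments, i.e., |{B ⊆ M : x_B > 0}| ≤ m. -/

import Mathlib

open Finset

/-- Service rate of BTS `i` under allocation `x`: `r_i(x) = Σ_{B ⊆ N} s_{i,B} x_B`. -/
noncomputable def serviceRate {n : ℕ} (s : Fin n → Finset (Fin n) → ℝ)
    (x : Finset (Fin n) → ℝ) (i : Fin n) : ℝ :=
  ∑ B : Finset (Fin n), s i B * x B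

/-- A spectrum allocation: nonnegative and summing to 1 over all reuse patterns. -/
def IsAlloc {n : ℕ} (x : Finset (Fin n) → ℝ) : Prop :=
  (∀ B, 0 ≤ x B) ∧ (∑ B : Finset (Fin n), x B) = 1

/-- Feasibility for problem (P1): allocation with `r_i(x) > λ_i` for all `i`. -/
def Feasible {n : ℕ} (s : Fin n → Finset (Fin n) → ℝ) (lam : Fin n → ℝ)
    (x : Finset (Fin n) → ℝ) : Prop :=
  IsAlloc x ∧ ∀ i, lam i < serviceRate s x i

/-- Average delay `D(x) = (Σ_j λ_j)⁻¹ Σ_i λ_i / (r_i(x) − λ_i)`. -/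
noncomputable def Delay {n : ℕ} (s : Fin n → Finset (Fin n) → ℝ) (lam : Fin n → ℝ)
    (x : Finset (Fin n) → ℝ) : ℝ :=
  (∑ j, lam j)⁻¹ * ∑ i, lam i / (serviceRate s x i - lam i)

/-- Optimality for problem (P1). -/
def Optimal {n : ℕ} (s : Fin n → Finset (Fin n) → ℝ) (lam : Fin n → ℝ)
    (x : Finset (Fin n) → ℝ) : Prop :=
  Feasible s lam x ∧ ∀ y, Feasible s lam y → Delay s lam x ≤ Delay s lam y

/-- for any optimal allocation `x*` and any subset `M` of size `m`,
there is an optimal allocation agreeing with `x*` outside the patterns contained in `M`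
and using at most `m` patterns contained in `M`. -/

private lemma serviceRate_add {n : ℕ} (s : Fin n → Finset (Fin n) → ℝ)
    (x d : Finset (Fin n) → ℝ) (ε : ℝ) (i : Fin n) :
    serviceRate s (fun B => x B + ε * d B) i
      = serviceRate s x i + ε * ∑ B : Finset (Fin n), s i B * d B := by
  unfold serviceRate
  rw [Finset.mul_sum, ← Finset.sum_add_distrib]
  exact Finset.sum_congr rfl fun B _ => by ring

private lemma delay_aux {n : ℕ} (hn : 1 ≤ n) (s : Fin n → Finset (Fin n) → ℝ)
    (lam : Fin n → ℝ) (hlam : ∀ i, 0 < lam i)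
    {x z : Finset (Fin n) → ℝ} (hx : Feasible s lam x) (hz : IsAlloc z)
    (hr : ∀ i, serviceRate s x i ≤ serviceRate s z i) :
    Feasible s lam z ∧ Delay s lam z ≤ Delay s lam x ∧
      (∀ i0, serviceRate s x i0 < serviceRate s z i0 → Delay s lam z < Delay s lam x) := by
  have hfz : Feasible s lam z := ⟨hz, fun i => lt_of_lt_of_le (hx.2 i) (hr i)⟩
  have hne : (Finset.univ : Finset (Fin n)).Nonempty := ⟨⟨0, hn⟩, Finset.mem_univ _⟩
  have hsum : 0 < ∑ j, lam j := Finset.sum_pos (fun i _ => hlam i) hne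
  have hterm : ∀ i, lam i / (serviceRate s z i - lam i) ≤ lam i / (serviceRate s x i - lam i) := by
    intro i
    have h1 : 0 < serviceRate s x i - lam i := sub_pos.mpr (hx.2 i)
    have h2 : serviceRate s x i - lam i ≤ serviceRate s z i - lam i := by linarith [hr i]
    gcongr
    exact (hlam i).le
  refine ⟨hfz, ?_, ?_⟩
  · unfold Delay
    exact mul_le_mul_of_nonneg_left (Finset.sum_le_sum fun i _ => hterm i)
      (inv_nonneg.mpr hsum.le)
  · intro i0 hi0
    unfold Delay
    refine mul_lt_mul_of_pos_left ?_ (inv_pos.mpr hsum)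
    refine Finset.sum_lt_sum (fun i _ => hterm i) ⟨i0, Finset.mem_univ _, ?_⟩
    have h1 : 0 < serviceRate s x i0 - lam i0 := sub_pos.mpr (hx.2 i0)
    exact div_lt_div_of_pos_left (hlam i0) h1 (by linarith)

private lemma key_lemma {n : ℕ} (hn : 1 ≤ n)
    (s : Fin n → Finset (Fin n) → ℝ)
    (hs_nonneg : ∀ i B, 0 ≤ s i B)
    (hs_zero : ∀ (i : Fin n) (B : Finset (Fin n)), i ∉ B → s i B = 0)
    (lam : Fin n → ℝ) (hlam : ∀ i, 0 < lam i)
    (xstar : Finset (Fin n) → ℝ) (M : Finset (Fin n)) :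
    ∀ k (x : Finset (Fin n) → ℝ), Optimal s lam x → (∀ B, ¬ B ⊆ M → x B = xstar B) →
      (Finset.univ.filter (fun B => B ⊆ M ∧ 0 < x B)).card ≤ k →
      ∃ x', Optimal s lam x' ∧ (∀ B, ¬ B ⊆ M → x' B = xstar B) ∧
        (Finset.univ.filter (fun B => B ⊆ M ∧ 0 < x' B)).card ≤ M.card := by
  intro k
  induction k with
  | zero => exact fun x hx hag hc => ⟨x, hx, hag, by omega⟩
  | succ k ih =>
    intro x hx hag hc
    by_cases hle : (Finset.univ.filter (fun B => B ⊆ M ∧ 0 < x B)).card ≤ M.card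
    · exact ⟨x, hx, hag, hle⟩
    push_neg at hle
    set F : Finset (Finset (Fin n)) := Finset.univ.filter (fun B => B ⊆ M ∧ 0 < x B) with hF
    -- facts about F
    have hFmem : ∀ B, B ∈ F ↔ (B ⊆ M ∧ 0 < x B) := by
      intro B; simp [hF]
    rcases Finset.eq_empty_or_nonempty M with rfl | ⟨i0, hi0⟩
    · -- M = ∅ : contradiction with optimality
      exfalso
      have hF1 : 0 < F.card := by simpa using hle
      obtain ⟨B, hB⟩ := Finset.card_pos.mp hF1
      rw [hFmem] at hB
      have hBempty : B = ∅ := Finset.subset_empty.mp hB.1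
      have hx0 : 0 < x ∅ := hBempty ▸ hB.2
      set j : Fin n := ⟨0, hn⟩
      have h1 : (0:ℝ) < ∑ B : Finset (Fin n), s j B * x B :=
        lt_trans (hlam j) (hx.1.2 j)
      have h2 : ∑ B : Finset (Fin n), (0:ℝ) < ∑ B : Finset (Fin n), s j B * x B := by
        simpa using h1
      obtain ⟨B0, -, hB0⟩ := Finset.exists_lt_of_sum_lt h2
      have hsB0 : 0 < s j B0 := by
        rcases mul_pos_iff.mp hB0 with ⟨h, -⟩ | ⟨h, -⟩
        · exact h
        · exact absurd h (not_lt.mpr (hs_nonneg j B0))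
      have hB0ne : B0 ≠ ∅ := by
        intro h
        rw [h, hs_zero j ∅ (Finset.notMem_empty j)] at hB0
        simp at hB0
      set d : Finset (Fin n) → ℝ :=
        fun B => (if B = B0 then (1:ℝ) else 0) - (if B = ∅ then 1 else 0) with hd
      set z : Finset (Fin n) → ℝ := fun B => x B + x ∅ * d B with hz
      have hdsum : ∑ B : Finset (Fin n), d B = 0 := by
        simp [hd, Finset.sum_sub_distrib]
      have hdS : ∀ i, ∑ B : Finset (Fin n), s i B * d B = s i B0 := by
        intro i
        simp [hd, mul_sub, Finset.sum_sub_distrib, mul_ite, mul_zero,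
          hs_zero i ∅ (Finset.notMem_empty i)]
      have hzB : ∀ B', z B' = x B' + x ∅ * ((if B' = B0 then (1:ℝ) else 0) - (if B' = ∅ then 1 else 0)) := fun _ => rfl
      have hznn : ∀ B', 0 ≤ z B' := by
        intro B'
        rw [hzB]
        by_cases h1 : B' = ∅
        · rw [h1, if_neg (Ne.symm hB0ne), if_pos rfl]
          ring_nf
          norm_num
        · by_cases h2 : B' = B0
          · rw [if_pos h2, if_neg h1]
            have h3 := hx.1.1.1 B'
            nlinarith [hx0.le]
          · rw [if_neg h2, if_neg h1]
            simpa using hx.1.1.1 B'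
      have hzsum : ∑ B : Finset (Fin n), z B = 1 := by
        rw [hz]
        rw [Finset.sum_add_distrib, ← Finset.mul_sum, hdsum, mul_zero, add_zero, hx.1.1.2]
      have hrz : ∀ i, serviceRate s z i = serviceRate s x i + x ∅ * s i B0 := by
        intro i; rw [hz, serviceRate_add, hdS]
      have hr : ∀ i, serviceRate s x i ≤ serviceRate s z i := by
        intro i; rw [hrz]; nlinarith [hs_nonneg i B0, hx0.le]
      obtain ⟨hfz, -, hstrict⟩ := delay_aux hn s lam hlam hx.1 ⟨hznn, hzsum⟩ hr
      have hlt : Delay s lam z < Delay s lam x := by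
        apply hstrict j
        rw [hrz j]
        nlinarith
      exact absurd (hx.2 z hfz) (not_le.mpr hlt)
    · -- M nonempty
      classical
      have hFcard : M.card + 1 ≤ F.card := hle
      -- the ambient space
      have hdim : Module.finrank ℝ (Option {i // i ∈ M} → ℝ) = M.card + 1 := by
        rw [Module.finrank_pi]
        simp [Fintype.card_option]
      set v : Option {B // B ∈ F} → (Option {i // i ∈ M} → ℝ) := fun o =>
        Option.elim o (fun j => if j = some ⟨i0, hi0⟩ then 1 else 0)
          (fun b j => Option.elim j 1 (fun i => s i.1 b.1)) with hv
      have hnli : ¬ LinearIndependent ℝ v := by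
        intro h
        have h2 := h.fintype_card_le_finrank
        rw [hdim] at h2
        rw [Fintype.card_option, Fintype.card_coe] at h2
        omega
      obtain ⟨g, hgsum, j0, hj0⟩ := Fintype.not_linearIndependent_iff.mp hnli
      set C : Finset (Fin n) → ℝ :=
        fun B => if h : B ∈ F then g (some ⟨B, h⟩) else 0 with hC
      have hCsupp : ∀ B, B ∉ F → C B = 0 := by
        intro B hB; simp [hC, dif_neg hB]
      have hattach : ∀ (f : Finset (Fin n) → ℝ),
          ∑ b ∈ F.attach, g (some b) * f b.1 = ∑ B ∈ F, C B * f B := by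
        intro f
        rw [← Finset.sum_attach F (fun B => C B * f B)]
        refine Finset.sum_congr rfl fun b _ => ?_
        simp [hC, dif_pos b.2]
      have hC0 : ∑ B ∈ F, C B = 0 := by
        have h1 := congrFun hgsum none
        simp only [Fintype.sum_option, Finset.sum_apply, Pi.add_apply, Pi.smul_apply,
          Pi.zero_apply, smul_eq_mul, hv, Option.elim, Finset.univ_eq_attach] at h1
        have h2 := hattach (fun _ => 1)
        simp only [mul_one] at h1 h2
        rw [h2] at h1
        simpa using h1
      have hCuniv0 : ∑ B : Finset (Fin n), C B = 0 := by
        rw [← hC0]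
        exact (Finset.sum_subset (Finset.subset_univ F)
          (fun B _ hB => hCsupp B hB)).symm
      have hSF : ∀ i : Fin n, ∑ B : Finset (Fin n), s i B * C B = ∑ B ∈ F, C B * s i B := by
        intro i
        rw [show (∑ B ∈ F, C B * s i B) = ∑ B ∈ F, s i B * C B from
          Finset.sum_congr rfl fun B _ => mul_comm _ _]
        exact (Finset.sum_subset (Finset.subset_univ F)
          (fun B _ hB => by rw [hCsupp B hB, mul_zero])).symm
      have hS : ∀ i : Fin n, ∑ B : Finset (Fin n), s i B * C B
          = if i = i0 then -(g none) else 0 := by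
        intro i
        rw [hSF]
        by_cases hiM : i ∈ M
        · have h1 := congrFun hgsum (some ⟨i, hiM⟩)
          simp only [Fintype.sum_option, Finset.sum_apply, Pi.add_apply, Pi.smul_apply,
            Pi.zero_apply, smul_eq_mul, hv, Option.elim, Finset.univ_eq_attach,
            Option.some.injEq, Subtype.mk.injEq] at h1
          rw [hattach (fun B => s i B)] at h1
          by_cases h5 : i = i0
          · have h9 : (if i = i0 then (1:ℝ) else 0) = 1 := if_pos h5
            rw [h9] at h1
            rw [if_pos h5]
            linarith
          · have h9 : (if i = i0 then (1:ℝ) else 0) = 0 := if_neg h5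
            rw [h9] at h1
            rw [if_neg h5]
            linarith
        · have h6 : ∀ B ∈ F, C B * s i B = 0 := by
            intro B hB
            rw [hs_zero i B (fun hiB => hiM ((hFmem B).mp hB |>.1 hiB)), mul_zero]
          rw [Finset.sum_eq_zero h6]
          have h7 : i ≠ i0 := fun h => hiM (h ▸ hi0)
          simp [h7]
      by_cases hγ : g none = 0
      · -- reduction step : same rates, smaller support
        have hj0some : ∃ b : {B // B ∈ F}, g (some b) ≠ 0 := by
          cases j0 with
          | none => exact absurd hj0 (by simpa using hγ)
          | some b => exact ⟨b, hj0⟩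
        obtain ⟨b1, hb1⟩ := hj0some
        have hCb1 : C b1.1 ≠ 0 := by
          have h9 : C b1.1 = g (some b1) := by
            simp only [hC]
            rw [dif_pos b1.2]
          rw [h9]
          exact hb1
        have hexpos : ∃ B1 ∈ F, 0 < C B1 := by
          by_contra hall
          push_neg at hall
          have h1 : ∑ B ∈ F, C B < ∑ B ∈ F, (0:ℝ) :=
            Finset.sum_lt_sum hall ⟨b1.1, b1.2, lt_of_le_of_ne (hall b1.1 b1.2) hCb1⟩
          rw [hC0] at h1
          simp at h1
        obtain ⟨B1, hB1F, hB1pos⟩ := hexpos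
        obtain ⟨B2, hB2G, hB2min⟩ := Finset.exists_min_image
          (F.filter fun B => 0 < C B) (fun B => x B / C B)
          ⟨B1, Finset.mem_filter.mpr ⟨hB1F, hB1pos⟩⟩
        rw [Finset.mem_filter] at hB2G
        set ε : ℝ := x B2 / C B2 with hε
        have hε0 : 0 ≤ ε := div_nonneg (hx.1.1.1 B2) hB2G.2.le
        set z : Finset (Fin n) → ℝ := fun B => x B + ε * (-(C B)) with hz
        have hznn : ∀ B, 0 ≤ z B := by
          intro B
          by_cases h1 : B ∈ F ∧ 0 < C B
          · have h2 := hB2min B (Finset.mem_filter.mpr h1)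
            have h3 : ε * C B ≤ x B := by
              have h4 : ε ≤ x B / C B := h2
              calc ε * C B ≤ (x B / C B) * C B :=
                    mul_le_mul_of_nonneg_right h4 h1.2.le
                _ = x B := div_mul_cancel₀ _ (ne_of_gt h1.2)
            simp only [hz]
            linarith
          · have h2 : C B ≤ 0 := by
              by_cases h3 : B ∈ F
              · by_contra h4
                exact h1 ⟨h3, lt_of_not_ge h4⟩
              · rw [hCsupp B h3]
            have := hx.1.1.1 B
            simp only [hz]
            nlinarith
        have hzsum : ∑ B : Finset (Fin n), z B = 1 := by
          simp only [hz]
          rw [Finset.sum_add_distrib, ← Finset.mul_sum]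
          rw [Finset.sum_neg_distrib, hCuniv0, neg_zero, mul_zero, add_zero, hx.1.1.2]
        have hrz : ∀ i, serviceRate s z i = serviceRate s x i := by
          intro i
          rw [hz, serviceRate_add]
          have h1 : ∑ B : Finset (Fin n), s i B * (-(C B))
              = -∑ B : Finset (Fin n), s i B * C B := by
            rw [← Finset.sum_neg_distrib]
            exact Finset.sum_congr rfl fun B _ => by ring
          rw [h1, hS, hγ]
          simp
        obtain ⟨hfz, hdle, -⟩ := delay_aux hn s lam hlam hx.1 ⟨hznn, hzsum⟩
          (fun i => (hrz i).ge)
        have hzopt : Optimal s lam z := by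
          refine ⟨hfz, fun y hy => ?_⟩
          exact le_trans hdle (hx.2 y hy)
        have hzag : ∀ B, ¬ B ⊆ M → z B = xstar B := by
          intro B hB
          have h1 : B ∉ F := fun h => hB ((hFmem B).mp h).1
          rw [hz]
          simp only [hCsupp B h1, neg_zero, mul_zero, add_zero]
          exact hag B hB
        have hzB2 : z B2 = 0 := by
          have h9 : C B2 ≠ 0 := ne_of_gt hB2G.2
          simp only [hz, hε]
          field_simp
          ring
        have hsub : (Finset.univ.filter (fun B => B ⊆ M ∧ 0 < z B)) ⊆ F.erase B2 := by
          intro B hB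
          rw [Finset.mem_filter] at hB
          have hBF : B ∈ F := by
            by_contra h1
            have h2 : z B = x B := by
              simp only [hz, hCsupp B h1, neg_zero, mul_zero, add_zero]
            exact h1 ((hFmem B).mpr ⟨hB.2.1, h2 ▸ hB.2.2⟩)
          refine Finset.mem_erase.mpr ⟨?_, hBF⟩
          intro h1
          rw [h1, hzB2] at hB
          exact lt_irrefl 0 hB.2.2
        have hcard2 : (Finset.univ.filter (fun B => B ⊆ M ∧ 0 < z B)).card ≤ k := by
          have h1 := Finset.card_le_card hsub
          have h2 := Finset.card_erase_of_mem hB2G.1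
          have h3 : 1 ≤ F.card := Finset.card_pos.mpr ⟨B2, hB2G.1⟩
          omega
        exact ih z hzopt hzag hcard2
      · -- contradiction with optimality
        exfalso
        obtain ⟨d, δ, hδ, hdsupp, hdsum, hdS⟩ :
            ∃ (d : Finset (Fin n) → ℝ) (δ : ℝ), 0 < δ ∧ (∀ B, B ∉ F → d B = 0) ∧
              (∑ B : Finset (Fin n), d B = 0) ∧
              (∀ i, ∑ B : Finset (Fin n), s i B * d B = if i = i0 then δ else 0) := by
          rcases (lt_or_gt_of_ne hγ) with h | h
          · refine ⟨C, -(g none), by linarith, hCsupp, hCuniv0, fun i => ?_⟩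
            rw [hS]
          · refine ⟨fun B => -(C B), g none, h,
              fun B hB => by show -(C B) = 0; rw [hCsupp B hB, neg_zero],
              by rw [Finset.sum_neg_distrib, hCuniv0, neg_zero], fun i => ?_⟩
            have h1 : ∑ B : Finset (Fin n), s i B * (-(C B))
                = -∑ B : Finset (Fin n), s i B * C B := by
              rw [← Finset.sum_neg_distrib]
              exact Finset.sum_congr rfl fun B _ => by ring
            rw [h1, hS]
            by_cases h2 : i = i0 <;> simp [h2]
        obtain ⟨ε, hεpos, hεle⟩ : ∃ ε : ℝ, 0 < ε ∧ ∀ B, d B < 0 → ε * (-(d B)) ≤ x B := by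
          rcases (Finset.univ.filter fun B => d B < 0).eq_empty_or_nonempty with he | hne2
          · refine ⟨1, one_pos, fun B hB => absurd ?_ (Finset.notMem_empty B)⟩
            rw [← he]
            exact Finset.mem_filter.mpr ⟨Finset.mem_univ B, hB⟩
          · obtain ⟨B3, hB3, hmin⟩ := Finset.exists_min_image _
              (fun B => x B / (-(d B))) hne2
            rw [Finset.mem_filter] at hB3
            have hB3F : B3 ∈ F := by
              by_contra h1
              rw [hdsupp B3 h1] at hB3
              exact lt_irrefl 0 hB3.2
            have hxB3 : 0 < x B3 := ((hFmem B3).mp hB3F).2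
            have hdB3 : 0 < -(d B3) := by linarith [hB3.2]
            refine ⟨x B3 / (-(d B3)), div_pos hxB3 hdB3, fun B hB => ?_⟩
            have h1 := hmin B (Finset.mem_filter.mpr ⟨Finset.mem_univ B, hB⟩)
            have h2 : 0 < -(d B) := by linarith
            calc x B3 / (-(d B3)) * (-(d B)) ≤ (x B / (-(d B))) * (-(d B)) :=
                  mul_le_mul_of_nonneg_right h1 h2.le
              _ = x B := div_mul_cancel₀ _ (ne_of_gt h2)
        set z : Finset (Fin n) → ℝ := fun B => x B + ε * d B with hz
        have hznn : ∀ B, 0 ≤ z B := by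
          intro B
          by_cases h1 : d B < 0
          · have h2 := hεle B h1
            simp only [hz]
            nlinarith
          · push_neg at h1
            have := hx.1.1.1 B
            simp only [hz]
            nlinarith
        have hzsum : ∑ B : Finset (Fin n), z B = 1 := by
          simp only [hz]
          rw [Finset.sum_add_distrib, ← Finset.mul_sum, hdsum, mul_zero, add_zero, hx.1.1.2]
        have hrz : ∀ i, serviceRate s z i
            = serviceRate s x i + ε * (if i = i0 then δ else 0) := by
          intro i
          rw [hz, serviceRate_add, hdS]
        have hr : ∀ i, serviceRate s x i ≤ serviceRate s z i := by
          intro i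
          rw [hrz]
          have h9 : 0 ≤ ε * (if i = i0 then δ else 0) := by
            by_cases h1 : i = i0
            · rw [if_pos h1]; positivity
            · rw [if_neg h1]; simp
          linarith
        obtain ⟨hfz, -, hstrict⟩ := delay_aux hn s lam hlam hx.1 ⟨hznn, hzsum⟩ hr
        have hlt : Delay s lam z < Delay s lam x := by
          apply hstrict i0
          rw [hrz i0]
          have h9 : (if i0 = i0 then δ else 0) = δ := if_pos rfl
          rw [h9]
          nlinarith [mul_pos hεpos hδ]
        exact absurd (hx.2 z hfz) (not_le.mpr hlt)

theorem conservative_optimal_subset_patterns {n : ℕ} (hn : 1 ≤ n)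
    (s : Fin n → Finset (Fin n) → ℝ)
    (hs_nonneg : ∀ i B, 0 ≤ s i B)
    (hs_zero : ∀ (i : Fin n) (B : Finset (Fin n)), i ∉ B → s i B = 0)
    (lam : Fin n → ℝ) (hlam : ∀ i, 0 < lam i)
    (xstar : Finset (Fin n) → ℝ) (hopt : Optimal s lam xstar)
    (M : Finset (Fin n)) :
    ∃ x : Finset (Fin n) → ℝ, Optimal s lam x ∧
      (∀ B : Finset (Fin n), ¬ B ⊆ M → x B = xstar B) ∧
      {B : Finset (Fin n) | B ⊆ M ∧ 0 < x B}.ncard ≤ M.card := by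
  classical
  obtain ⟨x, h1, h2, h3⟩ := key_lemma hn s hs_nonneg hs_zero lam hlam xstar M
    (Finset.univ.filter (fun B => B ⊆ M ∧ 0 < xstar B)).card xstar hopt
    (fun B _ => rfl) le_rfl
  refine ⟨x, h1, h2, ?_⟩
  have h4 : {B : Finset (Fin n) | B ⊆ M ∧ 0 < x B}
      = ↑(Finset.univ.filter (fun B => B ⊆ M ∧ 0 < x B)) := by
    ext B; simp
  rw [h4, Set.ncard_coe_finset]
  exact h3
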